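/- For every n ≥ 2, κ(n − κ(n) − 1) equals either κ(n) or κ(n) − 1, provided n − κ(n) − 1 ≥ 1. -/

import Mathlib

open SimpleGraph

/-- `κ(n)`: `0` for `n ≤ 1`, and `max{1, ⌈log₂ n − 2 log₂ log₂ n⌉}` for `n ≥ 2`. -/
noncomputable def kappa (n : ℕ) : ℕ :=
  if n ≤ 1 then 0
  else max 1 (Int.toNat ⌈Real.logb 2 (n : ℝ) - 2 * Real.logb 2 (Real.logb 2 (n : ℝ))⌉)

/-- XOR the first `k` bits with the last `k` bits of a binary string of length `n`. -/
def phiAux (n k : ℕ) (x : Fin n → ZMod 2) : Fin n → ZMod 2 :=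
  fun i => if h : i.val < k ∧ n - k + i.val < n then x i + x ⟨n - k + i.val, h.2⟩ else x i

/-- The permutation `φ` on `Z₂ⁿ`. -/
noncomputable def phi (n : ℕ) : (Fin n → ZMod 2) → (Fin n → ZMod 2) := phiAux n (kappa n)

/-- The Z-cube `H_n`, a graph on the binary strings of length `n`.  Bit `0` is the
"first" bit; `Fin.tail x` is the string `x` with its first bit removed. -/
noncomputable def Zcube : (n : ℕ) → SimpleGraph (Fin n → ZMod 2)
  | 0 => ⊥
  | (n + 1) =>
    { Adj := fun x y =>
        (x 0 = y 0 ∧ (Zcube n).Adj (Fin.tail x) (Fin.tail y)) ∨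
        (x 0 ≠ y 0 ∧ (Fin.tail y = phi n (Fin.tail x) ∨ Fin.tail x = phi n (Fin.tail y))),
      symm := ⟨by
        rintro x y (⟨h1, h2⟩ | ⟨h1, h2⟩)
        · exact Or.inl ⟨h1.symm, (Zcube n).symm.symm _ _ h2⟩
        · exact Or.inr ⟨h1.symm, h2.symm⟩⟩
      loopless := ⟨by
        rintro x (⟨h1, h2⟩ | ⟨h1, h2⟩)
        · exact (Zcube n).loopless.irrefl _ h2
        · exact h1 rfl⟩ }
/-- `σ_n = Σ_{j ∈ S(n)} j / κ(j)²`, where `S(n) = {j ≤ n : κ(j) = κ(j−1)+1}`. -/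
noncomputable def sigmaZ (n : ℕ) : ℝ :=
  ∑ j ∈ (Finset.range (n + 1)).filter (fun j => kappa j = kappa (j - 1) + 1),
    (j : ℝ) / (kappa j : ℝ) ^ 2

/-- The last `k` bits of a binary string of length `n` (for `k ≤ n`). -/
def lastBits (k n : ℕ) (v : Fin n → ZMod 2) : Fin k → ZMod 2 :=
  fun i => if h : n - k + i.val < n then v ⟨n - k + i.val, h⟩ else 0

/-- A walk in `H_n` is `k`-robust if every binary string of length `k` occurs as the
last `k` bits of some vertex of the walk. -/
def IsRobustWalk (k : ℕ) {n : ℕ} {x y : Fin n → ZMod 2} (W : (Zcube n).Walk x y) : Prop :=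
  ∀ z : Fin k → ZMod 2, ∃ v ∈ W.support, lastBits k n v = z

/-- The permutation `φ_k` on `Z₂ⁿ`. -/
def phiK (k n : ℕ) (x : Fin n → ZMod 2) : Fin n → ZMod 2 :=
  if n ≤ k then x
  else if n ≤ 2 * k then
    fun i => if h : i.val < n - k ∧ k + i.val < n then x i + x ⟨k + i.val, h.2⟩ else x i
  else
    fun i => if h : i.val < k ∧ n - k + i.val < n then x i + x ⟨n - k + i.val, h.2⟩ else x i

/-- The Z-cube `Z_{n,k}`. -/
def ZcubeK (k : ℕ) : (n : ℕ) → SimpleGraph (Fin n → ZMod 2)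
  | 0 => ⊥
  | (n + 1) =>
    { Adj := fun x y =>
        (x 0 = y 0 ∧ (ZcubeK k n).Adj (Fin.tail x) (Fin.tail y)) ∨
        (x 0 ≠ y 0 ∧ (Fin.tail y = phiK k n (Fin.tail x) ∨ Fin.tail x = phiK k n (Fin.tail y))),
      symm := ⟨by
        rintro x y (⟨h1, h2⟩ | ⟨h1, h2⟩)
        · exact Or.inl ⟨h1.symm, (ZcubeK k n).symm.symm _ _ h2⟩
        · exact Or.inr ⟨h1.symm, h2.symm⟩⟩
      loopless := ⟨by
        rintro x (⟨h1, h2⟩ | ⟨h1, h2⟩)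
        · exact (ZcubeK k n).loopless.irrefl _ h2
        · exact h1 rfl⟩ }

/-- The subgraph of `H_n` consisting of the cross edges, i.e. the edges between the
two copies `0H_{n−1}` and `1H_{n−1}` (edges whose endpoints differ in the first bit). -/
noncomputable def crossSubgraph (n : ℕ) : (Zcube n).Subgraph where
  verts := Set.univ
  Adj x y := ∃ h : 0 < n, (Zcube n).Adj x y ∧ x ⟨0, h⟩ ≠ y ⟨0, h⟩
  adj_sub := by rintro x y ⟨h, h1, h2⟩; exact h1
  edge_vert := by intro x y _; trivial
  symm := ⟨by rintro x y ⟨h, h1, h2⟩; exact ⟨h, h1.symm, h2.symm⟩⟩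

/-- A graph is Hamiltonian connected if any two distinct vertices are joined by a
Hamiltonian path. -/
def HamiltonianConnected {V : Type*} [DecidableEq V] (G : SimpleGraph V) : Prop :=
  ∀ x y : V, x ≠ y → ∃ p : G.Walk x y, p.IsHamiltonian

/-- The graph obtained from two disjoint copies of `G` by adding the perfect matching
`(u, false) ∼ (ψ u, true)` given by a bijection `ψ`. -/
def matchingJoin {V : Type*} (G : SimpleGraph V) (ψ : V ≃ V) : SimpleGraph (V × Bool) where
  Adj a b := (a.2 = b.2 ∧ G.Adj a.1 b.1) ∨
    (a.2 = false ∧ b.2 = true ∧ b.1 = ψ a.1) ∨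
    (a.2 = true ∧ b.2 = false ∧ a.1 = ψ b.1)
  symm := ⟨by
    rintro ⟨u, i⟩ ⟨v, j⟩ (⟨h1, h2⟩ | ⟨h1, h2, h3⟩ | ⟨h1, h2, h3⟩)
    · exact Or.inl ⟨h1.symm, h2.symm⟩
    · exact Or.inr (Or.inr ⟨h2, h1, h3⟩)
    · exact Or.inr (Or.inl ⟨h2, h1, h3⟩)⟩
  loopless := ⟨by
    rintro ⟨u, i⟩ (⟨h1, h2⟩ | ⟨h1, h2, h3⟩ | ⟨h1, h2, h3⟩)
    · exact G.loopless.irrefl _ h2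
    · simp_all
    · simp_all⟩


section KappaSubAux

/-- The real function underlying `kappa`. -/
noncomputable def fRK (x : ℝ) : ℝ := Real.logb 2 x - 2 * Real.logb 2 (Real.logb 2 x)

lemma kappa_eq_of_two_le (n : ℕ) (hn : 2 ≤ n) :
    kappa n = max 1 (Int.toNat ⌈fRK (n : ℝ)⌉) := by
  unfold kappa fRK
  rw [if_neg (by omega)]

lemma one_le_logb {x : ℝ} (hx : 2 ≤ x) : 1 ≤ Real.logb 2 x := by
  have := Real.logb_le_logb_of_le (b := 2) one_lt_two (by norm_num : (0:ℝ) < 2) hx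
  rwa [Real.logb_self_eq_one one_lt_two] at this

/-- Core comparison: for `16 ≤ a ≤ b ≤ 2a`, `fRK a ≤ fRK b ≤ fRK a + 1`. -/
lemma fRK_pair {a b : ℝ} (ha : 16 ≤ a) (hab : a ≤ b) (hba : b ≤ 2 * a) :
    fRK a ≤ fRK b ∧ fRK b ≤ fRK a + 1 := by
  have ha0 : (0:ℝ) < a := by linarith
  have hb0 : (0:ℝ) < b := by linarith
  set La := Real.logb 2 a with hLadef
  set Lb := Real.logb 2 b with hLbdef
  have hLa4 : 4 ≤ La := by
    have h16 : Real.logb 2 (16:ℝ) = 4 := by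
      rw [show (16:ℝ) = 2 ^ (4:ℕ) by norm_num, Real.logb_pow,
        Real.logb_self_eq_one one_lt_two]
      norm_num
    rw [hLadef, ← h16]
    exact Real.logb_le_logb_of_le one_lt_two (by norm_num) ha
  have hLab : La ≤ Lb := Real.logb_le_logb_of_le one_lt_two ha0 hab
  have hLb2a : Lb ≤ La + 1 := by
    have h : Real.logb 2 b ≤ Real.logb 2 (2 * a) :=
      Real.logb_le_logb_of_le one_lt_two hb0 hba
    rw [Real.logb_mul (by norm_num) ha0.ne', Real.logb_self_eq_one one_lt_two] at h
    rw [hLbdef, hLadef]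
    linarith
  set r := b / a with hrdef
  have hr1 : 1 ≤ r := (one_le_div ha0).mpr hab
  have hrla : Lb - La = Real.logb 2 r := by
    rw [hrdef, Real.logb_div hb0.ne' ha0.ne']
  have hlog2 : (0.6931 : ℝ) ≤ Real.log 2 := by
    have := Real.log_two_gt_d9; norm_num at this ⊢; linarith
  have hlog2pos : (0:ℝ) < Real.log 2 := by linarith
  have hLrlog : (Lb - La) * Real.log 2 ≤ r - 1 := by
    have h1 : Real.log r ≤ r - 1 := Real.log_le_sub_one_of_pos (by linarith)
    have h2 : (Lb - La) * Real.log 2 = Real.log r := by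
      rw [hrla, Real.logb, div_mul_cancel₀ _ hlog2pos.ne']
    linarith [h2 ▸ h1]
  have hLr1 : Lb - La ≤ 1 := by linarith
  have hLr0 : 0 ≤ Lb - La := by linarith
  -- key quadratic inequality
  have key : Lb ^ 2 ≤ r * La ^ 2 := by
    have h1 : 0 ≤ Real.log 2 * La ^ 2 - 2 * La - 1 := by nlinarith
    have h2 : (Lb - La) * (Real.log 2 * La ^ 2) ≤ (r - 1) * La ^ 2 := by
      nlinarith [sq_nonneg La]
    nlinarith [mul_nonneg hLr0 h1, mul_nonneg hLr0 (by linarith : (0:ℝ) ≤ 1 - (Lb - La))]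
  have hLa0 : (0:ℝ) < La := by linarith
  have hLb0 : (0:ℝ) < Lb := by linarith
  -- Lb / La ≤ sqrt r
  have hdivsqrt : Lb / La ≤ Real.sqrt r := by
    rw [div_le_iff₀ hLa0]
    have h : Lb ≤ Real.sqrt (r * La ^ 2) :=
      (Real.le_sqrt hLb0.le (mul_nonneg (by linarith) (sq_nonneg La))).mpr key
    rwa [Real.sqrt_mul (by linarith) (La ^ 2), Real.sqrt_sq hLa0.le] at h
  have hLLdiff : Real.logb 2 Lb - Real.logb 2 La ≤ (Lb - La) / 2 := by
    have h3 : Real.logb 2 (Lb / La) ≤ Real.logb 2 (Real.sqrt r) :=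
      Real.logb_le_logb_of_le one_lt_two (div_pos hLb0 hLa0) hdivsqrt
    have h4 : Real.logb 2 (Lb / La) = Real.logb 2 Lb - Real.logb 2 La :=
      Real.logb_div hLb0.ne' hLa0.ne'
    have h5 : Real.logb 2 (Real.sqrt r) = (Lb - La) / 2 := by
      rw [Real.logb, Real.log_sqrt (by linarith), hrla, Real.logb, div_div,
        mul_comm, ← div_div]
    rw [h4, h5] at h3
    exact h3
  have hLLmono : Real.logb 2 La ≤ Real.logb 2 Lb :=
    Real.logb_le_logb_of_le one_lt_two hLa0 hLab
  unfold fRK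
  rw [← hLadef, ← hLbdef]
  constructor <;> linarith

/-- `kappa n ≤ logb 2 n + 1` (as reals), for `n ≥ 2`. -/
lemma kappa_le_logb (n : ℕ) (hn : 2 ≤ n) : (kappa n : ℝ) ≤ Real.logb 2 n + 1 := by
  have hn2 : (2:ℝ) ≤ (n:ℝ) := by exact_mod_cast hn
  have hLn1 : 1 ≤ Real.logb 2 (n:ℝ) := one_le_logb hn2
  have hf : fRK (n:ℝ) ≤ Real.logb 2 (n:ℝ) := by
    unfold fRK
    have h0 : 0 ≤ Real.logb 2 (Real.logb 2 (n:ℝ)) := by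
      have := Real.logb_le_logb_of_le (b := 2) one_lt_two one_pos hLn1
      simpa using this
    linarith
  rw [kappa_eq_of_two_le n hn]
  rcases le_or_gt (⌈fRK (n:ℝ)⌉ : ℤ) 1 with hle | hgt
  · have h : max 1 (Int.toNat ⌈fRK (n:ℝ)⌉) = 1 := by omega
    rw [h]; push_cast; linarith
  · have htn : max 1 (Int.toNat ⌈fRK (n:ℝ)⌉) = Int.toNat ⌈fRK (n:ℝ)⌉ := by omega
    rw [htn]
    have h1 : ((Int.toNat ⌈fRK (n:ℝ)⌉ : ℕ) : ℝ) = ((⌈fRK (n:ℝ)⌉ : ℤ) : ℝ) := by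
      exact_mod_cast Int.toNat_of_nonneg (by omega)
    rw [h1]
    have := Int.ceil_lt_add_one (fRK (n:ℝ))
    linarith

/-- `kappa` comparison from `fRK` comparison. -/
lemma kappa_compare (a b : ℕ) (ha : 2 ≤ a) (hab : a ≤ b)
    (h1 : fRK a ≤ fRK b) (h2 : fRK b ≤ fRK a + 1) :
    kappa a ≤ kappa b ∧ kappa b ≤ kappa a + 1 := by
  rw [kappa_eq_of_two_le a ha, kappa_eq_of_two_le b (le_trans ha hab)]
  have hc1 : ⌈fRK (a:ℝ)⌉ ≤ ⌈fRK (b:ℝ)⌉ := Int.ceil_le_ceil h1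
  have hc2 : ⌈fRK (b:ℝ)⌉ ≤ ⌈fRK (a:ℝ)⌉ + 1 := by
    have h := Int.ceil_le_ceil h2
    rwa [Int.ceil_add_one] at h
  omega

lemma logb_nat_ge (k n : ℕ) (h : 2 ^ k ≤ n) : (k : ℝ) ≤ Real.logb 2 n := by
  have h0 : (0:ℝ) < (2:ℝ) ^ k := by positivity
  have hh : Real.logb 2 ((2:ℝ) ^ k) ≤ Real.logb 2 (n:ℝ) := by
    apply Real.logb_le_logb_of_le one_lt_two h0
    exact_mod_cast h
  rwa [Real.logb_pow, Real.logb_self_eq_one one_lt_two, mul_one] at hh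

/-- `kappa n = 1` for `2 ≤ n ≤ 48`. -/
lemma kappa_eq_one_of_le_48 (n : ℕ) (h2 : 2 ≤ n) (h48 : n ≤ 48) : kappa n = 1 := by
  have hn2 : (2:ℝ) ≤ (n:ℝ) := by exact_mod_cast h2
  have hLn1 : 1 ≤ Real.logb 2 (n:ℝ) := one_le_logb hn2
  have hkey : (n:ℝ) ≤ 2 * Real.logb 2 (n:ℝ) ^ 2 := by
    set L := Real.logb 2 (n:ℝ) with hL
    rcases lt_or_ge n 3 with h | h
    · have hn2' : n = 2 := by omega
      have hnR : (n:ℝ) = 2 := by exact_mod_cast hn2'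
      nlinarith
    · rcases lt_or_ge n 4 with h' | h'
      · have hn3 : n = 3 := by omega
        have hnR : (n:ℝ) = 3 := by exact_mod_cast hn3
        have hL32 : (3:ℝ)/2 ≤ L := by
          rw [hL, hnR]
          have h9 : ((2:ℝ)^(3:ℕ)) ≤ (3:ℝ)^(2:ℕ) := by norm_num
          have hlog : (3:ℝ) * Real.logb 2 2 ≤ 2 * Real.logb 2 3 := by
            have hmono := Real.logb_le_logb_of_le (b := 2) one_lt_two
              (by positivity : (0:ℝ) < (2:ℝ)^(3:ℕ)) h9
            rw [Real.logb_pow, Real.logb_pow] at hmono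
            push_cast at hmono
            linarith
          rw [Real.logb_self_eq_one one_lt_two] at hlog
          linarith
        nlinarith
      · rcases lt_or_ge n 8 with h'' | h''
        · have hLge : (2:ℝ) ≤ L := hL ▸ logb_nat_ge 2 n (by omega)
          have hle : (n:ℝ) ≤ 8 := by exact_mod_cast (by omega : n ≤ 8)
          nlinarith
        · rcases lt_or_ge n 16 with h3 | h3
          · have hLge : (3:ℝ) ≤ L := hL ▸ logb_nat_ge 3 n (by omega)
            have hle : (n:ℝ) ≤ 16 := by exact_mod_cast (by omega : n ≤ 16)
            nlinarith
          · rcases lt_or_ge n 32 with h4 | h4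
            · have hLge : (4:ℝ) ≤ L := hL ▸ logb_nat_ge 4 n (by omega)
              have hle : (n:ℝ) ≤ 32 := by exact_mod_cast (by omega : n ≤ 32)
              nlinarith
            · have hLge : (5:ℝ) ≤ L := hL ▸ logb_nat_ge 5 n (by omega)
              have hle : (n:ℝ) ≤ 50 := by exact_mod_cast (by omega : n ≤ 50)
              nlinarith
  have hf1 : fRK (n:ℝ) ≤ 1 := by
    unfold fRK
    have hLpos : (0:ℝ) < Real.logb 2 (n:ℝ) := by linarith
    have hstep : Real.logb 2 (n:ℝ) ≤ Real.logb 2 (2 * Real.logb 2 (n:ℝ) ^ 2) :=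
      Real.logb_le_logb_of_le one_lt_two (by linarith) hkey
    rw [Real.logb_mul (by norm_num) (by positivity),
      Real.logb_self_eq_one one_lt_two,
      show Real.logb 2 (n:ℝ) ^ 2 = Real.logb 2 (n:ℝ) ^ (2:ℕ) from rfl,
      Real.logb_pow] at hstep
    push_cast at hstep
    linarith
  rw [kappa_eq_of_two_le n h2]
  have hceil : ⌈fRK (n:ℝ)⌉ ≤ 1 := by
    have : ⌈fRK (n:ℝ)⌉ ≤ ⌈(1:ℝ)⌉ := Int.ceil_le_ceil hf1
    simpa using this
  omega

lemma logb_le_three_sqrt {x : ℝ} (hx : 1 ≤ x) : Real.logb 2 x ≤ 3 * Real.sqrt x := by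
  have hs : 0 < Real.sqrt x := Real.sqrt_pos.mpr (by linarith)
  have h1 : Real.log x ≤ 2 * (Real.sqrt x - 1) := by
    have h := Real.log_le_sub_one_of_pos hs
    rw [show Real.log (Real.sqrt x) = Real.log x / 2 from Real.log_sqrt (by linarith)] at h
    linarith
  have hlog2 : (0.6931 : ℝ) ≤ Real.log 2 := by
    have := Real.log_two_gt_d9; norm_num at this ⊢; linarith
  rw [Real.logb, div_le_iff₀ (by linarith)]
  nlinarith

end KappaSubAux

/-- for every `n ≥ 2` with `n − κ(n) − 1 ≥ 1`, `κ(n − κ(n) − 1)` equals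
either `κ(n)` or `κ(n) − 1`. -/
theorem kappa_of_sub (n : ℕ) (hn : 2 ≤ n) (h : 1 ≤ n - kappa n - 1) :
    kappa (n - kappa n - 1) = kappa n ∨ kappa (n - kappa n - 1) = kappa n - 1 := by
  rcases le_or_gt n 48 with hsmall | hbig
  · -- small case: kappa n = 1
    have hk1 : kappa n = 1 := kappa_eq_one_of_le_48 n hn hsmall
    have hm : n - kappa n - 1 = n - 2 := by omega
    rw [hm] at h ⊢
    rw [hk1]
    rcases le_or_gt (n - 2) 1 with h1 | h1
    · have hn3 : n = 3 := by omega
      subst hn3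
      right
      norm_num [kappa]
    · left
      exact kappa_eq_one_of_le_48 (n - 2) (by omega) (by omega)
  · -- large case
    have hn2 : 2 ≤ n := hn
    have hnR : (49:ℝ) ≤ (n:ℝ) := by exact_mod_cast hbig
    have hsql : (7:ℝ) ≤ Real.sqrt (n:ℝ) := by
      have hmono : Real.sqrt 49 ≤ Real.sqrt (n:ℝ) := Real.sqrt_le_sqrt hnR
      rwa [show (49:ℝ) = 7^2 by norm_num, Real.sqrt_sq (by norm_num : (0:ℝ) ≤ 7)] at hmono
    have hsq : Real.sqrt (n:ℝ) ^ 2 = (n:ℝ) := Real.sq_sqrt (by linarith)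
    have hlog3 : Real.logb 2 (n:ℝ) ≤ 3 * Real.sqrt (n:ℝ) :=
      logb_le_three_sqrt (by linarith)
    have hkb : (kappa n : ℝ) ≤ Real.logb 2 (n:ℝ) + 1 := kappa_le_logb n hn2
    have hb1 : (kappa n : ℝ) + 17 ≤ (n:ℝ) := by nlinarith
    have hb2 : 2 * (kappa n : ℝ) + 2 ≤ (n:ℝ) := by nlinarith
    have hb1' : kappa n + 17 ≤ n := by
      exact_mod_cast (by push_cast; linarith : ((kappa n + 17 : ℕ) : ℝ) ≤ (n:ℝ))
    have hb2' : 2 * kappa n + 2 ≤ n := by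
      exact_mod_cast (by push_cast; linarith : ((2 * kappa n + 2 : ℕ) : ℝ) ≤ (n:ℝ))
    set m := n - kappa n - 1 with hmdef
    have hm16 : 16 ≤ m := by omega
    have hmR : (m:ℝ) = (n:ℝ) - (kappa n : ℝ) - 1 := by
      have hsum : m + (kappa n + 1) = n := by omega
      have : ((m + (kappa n + 1) : ℕ) : ℝ) = (n:ℝ) := by exact_mod_cast congrArg Nat.cast hsum
      push_cast at this
      linarith
    have hpair := fRK_pair (a := (m:ℝ)) (b := (n:ℝ))
      (by exact_mod_cast hm16) (by exact_mod_cast (by omega : m ≤ n))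
      (by rw [hmR]; linarith)
    have hcmp := kappa_compare m n (by omega) (by omega) hpair.1 hpair.2
    omega
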